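/- Let d ≥ 1 be an integer and let c_d = c_{d,α_d} with α_d = 1 when d is even and α_d = π/2 when d is odd. Then there exists a constant C > 0 such that for every s ∈ [0,1], every k ∈ ℕ and every t ≥ 0, |c_d^{(k)}(t)| ≤ C^{1+k} (k!)^{(1+s)/2} (1+t)^{−1−sk}. -/

import Mathlib

open scoped Nat

/-- The function `c_{d,α}` of the paper: the candidate (rescaled radial profile of the)
Weyl symbol of the inverse of the harmonic oscillator, depending on a parameter `α`. -/
noncomputable def cda (d : ℕ) (α : ℝ) (t : ℝ) : ℝ :=
  ((d‼ : ℝ) / d) *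
    (α * (∑' p : ℕ, t ^ (2*p) / (((2*p)‼ * (2*p + d - 1)‼ : ℕ) : ℝ)) -
      ∑' p : ℕ, t ^ (2*p+1) / (((2*p+1)‼ * (2*p + d)‼ : ℕ) : ℝ))

open Real MeasureTheory intervalIntegral

noncomputable def αd (d : ℕ) : ℝ := if Even d then 1 else π/2

noncomputable def coefa (d n : ℕ) : ℝ :=
  (if Even n then αd d else 1) * (d‼ : ℝ) / ((d : ℝ) * ((n‼ * (n + d - 1)‼ : ℕ) : ℝ))

noncomputable def mInt (d n : ℕ) : ℝ :=
  ∫ θ in (0:ℝ)..(π/2), sin θ ^ n * cos θ ^ (d - 1)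

noncomputable def Fd (d : ℕ) (t : ℝ) : ℝ :=
  ∫ θ in (0:ℝ)..(π/2), exp (-(t * sin θ)) * cos θ ^ (d - 1)

noncomputable def Gd (d k : ℕ) (t : ℝ) : ℝ :=
  ∫ θ in (0:ℝ)..(π/2), sin θ ^ k * exp (-(t * sin θ)) * cos θ ^ (d - 1)

lemma contMul (n e : ℕ) : Continuous (fun θ : ℝ => sin θ ^ n * cos θ ^ e) := by
  fun_prop

lemma deriv_key (e n : ℕ) (θ : ℝ) :
    HasDerivAt (fun θ => sin θ ^ (n+1) * cos θ ^ (e+1))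
      (((n:ℝ)+1) * (sin θ ^ n * cos θ ^ e) -
        (((n:ℝ)+1+((e:ℝ)+1)) * (sin θ ^ (n+2) * cos θ ^ e))) θ := by
  have h1 := ((hasDerivAt_sin θ).fun_pow (n+1)).fun_mul ((hasDerivAt_cos θ).fun_pow (e+1))
  convert h1 using 1
  · rfl
  · rfl
  have hc : cos θ ^ 2 = 1 - sin θ ^ 2 := by
    have := sin_sq_add_cos_sq θ; linarith
  simp only [Nat.add_sub_cancel]
  push_cast
  have e1 : ((n:ℝ) + 1) * sin θ ^ n * cos θ * cos θ ^ (e + 1)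
      = ((n:ℝ)+1) * sin θ ^ n * cos θ ^ e * cos θ ^ 2 := by ring
  have e2 : sin θ ^ (n + 1) * (((e:ℝ) + 1) * cos θ ^ e * -sin θ)
      = -(((e:ℝ)+1) * (sin θ^n * sin θ ^2) * cos θ ^ e) := by ring
  rw [e1, e2, hc]
  have e3 : sin θ ^ (n+2) = sin θ ^ n * sin θ ^ 2 := by ring
  rw [e3]; ring

lemma mInt_rec (e n : ℕ) :
    ((n:ℝ) + 1 + ((e:ℝ)+1)) * mInt (e+1) (n+2) = ((n:ℝ)+1) * mInt (e+1) n := by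
  have hint : ∀ m : ℕ, IntervalIntegrable (fun θ : ℝ => sin θ ^ m * cos θ ^ e)
      volume 0 (π/2) := fun m => (contMul m e).intervalIntegrable _ _
  have := integral_eq_sub_of_hasDerivAt (f := fun θ => sin θ ^ (n+1) * cos θ ^ (e+1))
    (f' := fun θ => ((n:ℝ)+1) * (sin θ ^ n * cos θ ^ e) -
        (((n:ℝ)+1+((e:ℝ)+1)) * (sin θ ^ (n+2) * cos θ ^ e)))
    (a := 0) (b := π/2) (fun θ _ => deriv_key e n θ)
    (((continuous_const.mul (contMul n e)).sub
      (continuous_const.mul (contMul (n+2) e))).intervalIntegrable _ _)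
  rw [intervalIntegral.integral_sub ((hint n).const_mul _) ((hint (n+2)).const_mul _),
    intervalIntegral.integral_const_mul, intervalIntegral.integral_const_mul] at this
  simp [Real.cos_pi_div_two, Real.sin_pi_div_two, Real.sin_zero] at this
  unfold mInt
  simp only [Nat.add_sub_cancel]
  linarith

lemma mInt_one (e : ℕ) : mInt (e+1) 1 = 1/((e:ℝ)+1) := by
  have key : ∀ θ : ℝ, HasDerivAt (fun θ => -(cos θ ^ (e+1)) / ((e:ℝ)+1))
      (sin θ ^ 1 * cos θ ^ e) θ := by
    intro θ
    have h1 := ((hasDerivAt_cos θ).fun_pow (e+1)).fun_neg.div_const ((e:ℝ)+1)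
    convert h1 using 1
    · rfl
    · rfl
    simp only [Nat.add_sub_cancel]
    push_cast
    field_simp
  have := integral_eq_sub_of_hasDerivAt (a := 0) (b := π/2) (fun θ _ => key θ)
    ((contMul 1 e).intervalIntegrable _ _)
  unfold mInt
  simp only [Nat.add_sub_cancel]
  rw [this]
  have : ((e:ℝ)+1) ≠ 0 := by positivity
  simp
  field_simp

lemma mInt_zero_one : mInt 1 0 = π / 2 := by
  unfold mInt; simp

lemma mInt_zero_two : mInt 2 0 = 1 := by
  unfold mInt; simp [integral_cos]

lemma mInt_two (e : ℕ) : mInt (e+1) 2 = mInt (e+1) 0 / ((e:ℝ)+2) := by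
  have h := mInt_rec e 0
  have h2 : ((e:ℝ)+2) ≠ 0 := by positivity
  field_simp
  push_cast at h
  linarith

lemma mInt_step (e : ℕ) : mInt (e+3) 0 = ((e:ℝ)+1)/((e:ℝ)+2) * mInt (e+1) 0 := by
  have h1 : mInt (e+3) 0 = mInt (e+1) 0 - mInt (e+1) 2 := by
    unfold mInt
    simp only [Nat.add_sub_cancel, show e+3-1 = e+2 from rfl]
    rw [← intervalIntegral.integral_sub ((contMul 0 e).intervalIntegrable _ _)
      ((contMul 2 e).intervalIntegrable _ _)]
    apply intervalIntegral.integral_congr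
    intro θ _
    simp only []
    have hc : cos θ ^ 2 = 1 - sin θ ^ 2 := by
      have := sin_sq_add_cos_sq θ; linarith
    have h2 : cos θ ^ (e+2) = cos θ ^ e * cos θ ^ 2 := by ring
    rw [h2, hc]; ring
  rw [h1, mInt_two]
  have : ((e:ℝ)+2) ≠ 0 := by positivity
  field_simp
  ring

lemma mInt_zero (d : ℕ) (hd : 1 ≤ d) :
    mInt d 0 = (d‼ : ℝ) * αd d / (d * ((d-1)‼ : ℕ)) := by
  obtain ⟨e, rfl⟩ : ∃ e, d = e + 1 := ⟨d - 1, (Nat.succ_pred_eq_of_pos hd).symm⟩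
  clear hd
  induction e using Nat.strong_induction_on with
  | _ e ih =>
    match e with
    | 0 => simp [mInt_zero_one, αd, Nat.doubleFactorial]
    | 1 =>
      rw [mInt_zero_two]
      norm_num [αd, Nat.doubleFactorial]
    | (k+2) =>
      have h := ih k (by omega)
      rw [show k+2+1 = k+1+2 from rfl, mInt_step k, h]
      have hα : αd (k+1+2) = αd (k+1) := by
        unfold αd
        simp [Nat.even_add_one, parity_simps]
      rw [hα]
      simp only [show k+1+2-1 = k+2 from rfl, show k+1-1 = k from rfl] at *
      have h2 : (k+1+2)‼ = (k+3) * (k+1)‼ := Nat.doubleFactorial_add_two (k+1)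
      have h3 : (k+2)‼ = (k+2) * k‼ := Nat.doubleFactorial_add_two k
      rw [h2, h3]
      push_cast
      have c1 : ((k:ℝ)+2) ≠ 0 := by positivity
      have c2 : ((k:ℝ)+1) ≠ 0 := by positivity
      have c3 : ((k:ℝ)+3) ≠ 0 := by positivity
      have c4 : ((k‼ : ℕ) : ℝ) ≠ 0 := by
        positivity
      field_simp
      ring

lemma dfac_ne (n : ℕ) : ((n‼ : ℕ) : ℝ) ≠ 0 := by positivity

lemma mInt_eq (d : ℕ) (hd : 1 ≤ d) (n : ℕ) :
    mInt d n = (n ! : ℝ) * coefa d n := by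
  induction n using Nat.strong_induction_on with
  | _ n ih =>
    match n with
    | 0 =>
      rw [mInt_zero d hd]
      simp [coefa, Nat.doubleFactorial]
      ring
    | 1 =>
      obtain ⟨e, rfl⟩ : ∃ e, d = e + 1 := ⟨d - 1, (Nat.succ_pred_eq_of_pos hd).symm⟩
      rw [mInt_one e]
      have h1 : ((e:ℝ)+1) ≠ 0 := by positivity
      have h2 := dfac_ne (e+1)
      simp only [coefa, Nat.factorial_one, Nat.cast_one, one_mul,
        show 1 + (e+1) - 1 = e + 1 from by omega, if_neg (by simp : ¬ Even 1)]
      push_cast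
      rw [show (1:ℕ)‼ = 1 from rfl]
      push_cast
      field_simp
    | (m+2) =>
      obtain ⟨e, rfl⟩ : ∃ e, d = e + 1 := ⟨d - 1, (Nat.succ_pred_eq_of_pos hd).symm⟩
      have hrec := mInt_rec e m
      have hm := ih m (by omega)
      have hpos : ((m:ℝ) + 1 + ((e:ℝ)+1)) ≠ 0 := by positivity
      have hstep : mInt (e+1) (m+2)
          = ((m:ℝ)+1) / ((m:ℝ) + 1 + ((e:ℝ)+1)) * mInt (e+1) m := by
        field_simp
        linarith
      rw [hstep, hm]
      -- now pure arithmetic about coefa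
      simp only [coefa]
      have heq : Even (m+2) ↔ Even m := by simp [Nat.even_add_one, parity_simps]
      rw [show ((m+2)‼ : ℕ) = (m+2) * m‼ from Nat.doubleFactorial_add_two m,
        show (m+2+(e+1)-1) = (m + (e+1) - 1) + 2 from by omega,
        show ((m+(e+1)-1+2)‼ : ℕ) = (m+(e+1)-1+2) * (m+(e+1)-1)‼ from
          Nat.doubleFactorial_add_two _,
        show (m+2)! = (m+2)*((m+1)*m !) from by rw [Nat.factorial_succ, Nat.factorial_succ]]
      rw [show (m + (e+1) - 1) = m + e from by omega]
      by_cases hpar : Even m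
      · rw [if_pos (heq.mpr hpar), if_pos hpar]
        push_cast
        have := dfac_ne m; have := dfac_ne (m+e)
        have h1 : ((e:ℝ)+1) ≠ 0 := by positivity
        have h2 : ((m:ℝ)+2) ≠ 0 := by positivity
        have h3 : ((m:ℝ)+(e:ℝ)+2) ≠ 0 := by positivity
        field_simp
        ring
      · rw [if_neg (fun h => hpar (heq.mp h)), if_neg hpar]
        push_cast
        have := dfac_ne m; have := dfac_ne (m+e)
        have h1 : ((e:ℝ)+1) ≠ 0 := by positivity
        have h2 : ((m:ℝ)+2) ≠ 0 := by positivity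
        have h3 : ((m:ℝ)+(e:ℝ)+2) ≠ 0 := by positivity
        field_simp
        ring

lemma pi_div_two_pos' : (0:ℝ) < π/2 := by positivity

lemma sin_mem {θ : ℝ} (h : θ ∈ Set.Ioc (0:ℝ) (π/2)) : 0 ≤ sin θ ∧ sin θ ≤ 1 :=
  ⟨Real.sin_nonneg_of_nonneg_of_le_pi (le_of_lt h.1) (by linarith [h.2, pi_pos.le]),
    Real.sin_le_one θ⟩

lemma cos_mem {θ : ℝ} (h : θ ∈ Set.Ioc (0:ℝ) (π/2)) : 0 ≤ cos θ ∧ cos θ ≤ 1 :=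
  ⟨Real.cos_nonneg_of_mem_Icc ⟨by linarith [h.1, pi_pos], h.2⟩, Real.cos_le_one θ⟩

lemma hasSum_Fd (d : ℕ) (hd : 1 ≤ d) (t : ℝ) :
    HasSum (fun n : ℕ => (-t)^n * coefa d n) (Fd d t) := by
  set μ : Measure ℝ := volume.restrict (Set.Ioc (0:ℝ) (π/2)) with hμ
  have hmono : ∀ n : ℕ, ∀ᵐ θ ∂μ, ‖(-t)^n / (n ! : ℝ) * (sin θ ^ n * cos θ ^ (d-1))‖
      ≤ |t|^n / (n ! : ℝ) := by
    intro n
    rw [ae_restrict_iff' measurableSet_Ioc]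
    filter_upwards with θ hθ
    obtain ⟨hs0, hs1⟩ := sin_mem hθ
    obtain ⟨hc0, hc1⟩ := cos_mem hθ
    have h1 : |sin θ ^ n * cos θ ^ (d-1)| ≤ 1 := by
      rw [abs_mul, abs_pow, abs_pow, abs_of_nonneg hs0, abs_of_nonneg hc0]
      exact mul_le_one₀ (pow_le_one₀ hs0 hs1) (by positivity) (pow_le_one₀ hc0 hc1)
    have h2 : ‖(-t)^n / (n ! : ℝ) * (sin θ ^ n * cos θ ^ (d-1))‖
        = |t|^n / (n ! : ℝ) * |sin θ ^ n * cos θ ^ (d-1)| := by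
      rw [norm_mul, norm_div, norm_pow, norm_neg, Real.norm_eq_abs,
        Real.norm_eq_abs, Real.norm_eq_abs, abs_of_nonneg (by positivity :
          (0:ℝ) ≤ (n ! : ℝ))]
    rw [h2]
    have h3 : (0:ℝ) ≤ |t|^n / (n ! : ℝ) := by positivity
    nlinarith [mul_le_mul_of_nonneg_left h1 h3]
  have hint : ∀ n : ℕ, Integrable
      (fun θ => (-t)^n / (n ! : ℝ) * (sin θ ^ n * cos θ ^ (d-1))) μ := by
    intro n
    exact (Continuous.integrableOn_Ioc (by fun_prop))
  have hsummable : Summable (fun n : ℕ =>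
      ∫ θ, ‖(-t)^n / (n ! : ℝ) * (sin θ ^ n * cos θ ^ (d-1))‖ ∂μ) := by
    apply Summable.of_nonneg_of_le (fun n => by positivity)
      (fun n => ?_) ((summable_pow_div_factorial |t|).mul_right (π/2))
    have hb : ‖∫ θ, ‖(-t)^n / (n ! : ℝ) * (sin θ ^ n * cos θ ^ (d-1))‖ ∂μ‖
        ≤ |t|^n / (n ! : ℝ) * (μ Set.univ).toReal := by
      apply MeasureTheory.norm_integral_le_of_norm_le_const
      filter_upwards [hmono n] with θ h
      rwa [norm_norm]
    have hμuniv : (μ Set.univ).toReal = π/2 := by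
      rw [hμ, Measure.restrict_apply MeasurableSet.univ, Set.univ_inter,
        Real.volume_Ioc]
      simp [ENNReal.toReal_ofReal pi_div_two_pos'.le]
    rw [hμuniv] at hb
    exact le_trans (le_abs_self _) hb
  have key := MeasureTheory.hasSum_integral_of_summable_integral_norm hint hsummable
  have hsum_eq : (∫ θ, ∑' n : ℕ, (-t)^n / (n ! : ℝ) * (sin θ ^ n * cos θ ^ (d-1)) ∂μ)
      = Fd d t := by
    rw [Fd, intervalIntegral.integral_of_le pi_div_two_pos'.le]
    apply MeasureTheory.integral_congr_ae
    filter_upwards with θ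
    have hexp : Real.exp (-(t * sin θ)) = ∑' n : ℕ, (-(t * sin θ))^n / (n ! : ℝ) := by
      rw [Real.exp_eq_exp_ℝ, NormedSpace.exp_eq_tsum_div]
    rw [hexp, ← tsum_mul_right]
    congr 1; funext n
    rw [show (-(t * sin θ)) = (-t) * sin θ from by ring, mul_pow]
    ring
  rw [hsum_eq] at key
  convert key using 2 with n
  · rfl
  have : (∫ θ, (-t)^n / (n ! : ℝ) * (sin θ ^ n * cos θ ^ (d-1)) ∂μ)
      = (-t)^n / (n ! : ℝ) * mInt d n := by
    rw [MeasureTheory.integral_const_mul, mInt, intervalIntegral.integral_of_le pi_div_two_pos'.le]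
  rw [this, mInt_eq d hd n]
  have : (n ! : ℝ) ≠ 0 := by positivity
  field_simp

lemma prod_dfac_ne (a b : ℕ) : ((a‼ * b‼ : ℕ) : ℝ) ≠ 0 := by
  exact_mod_cast Nat.mul_ne_zero (Nat.doubleFactorial_pos _).ne' (Nat.doubleFactorial_pos _).ne'

lemma cda_eq_Fd (d : ℕ) (hd : 1 ≤ d) (t : ℝ) : cda d (αd d) t = Fd d t := by
  have hs := hasSum_Fd d hd t
  set f : ℕ → ℝ := fun n => (-t)^n * coefa d n with hf
  have hse : Summable fun k => f (2*k) :=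
    hs.summable.comp_injective (fun a b h => by omega)
  have hso : Summable fun k => f (2*k+1) :=
    hs.summable.comp_injective (fun a b h => by omega)
  rw [← hs.tsum_eq, ← tsum_even_add_odd hse hso]
  have hd0 : (d:ℝ) ≠ 0 := by positivity
  have hA : ((d‼:ℝ)/d) * (αd d * ∑' p : ℕ, t ^ (2*p) / (((2*p)‼ * (2*p + d - 1)‼ : ℕ) : ℝ))
      = ∑' k : ℕ, f (2*k) := by
    rw [← tsum_mul_left, ← tsum_mul_left]
    apply tsum_congr
    intro p
    have hev : Even (2*p) := ⟨p, by ring⟩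
    have hN := prod_dfac_ne (2*p) (2*p + d - 1)
    simp only [hf, hev.neg_pow, coefa, if_pos hev]
    push_cast at hN ⊢
    field_simp
  have hB : ((d‼:ℝ)/d) * ∑' p : ℕ, t ^ (2*p+1) / (((2*p+1)‼ * (2*p + d)‼ : ℕ) : ℝ)
      = -∑' k : ℕ, f (2*k+1) := by
    rw [← tsum_mul_left, ← tsum_neg]
    apply tsum_congr
    intro p
    have hod : ¬ Even (2*p+1) := by simp [parity_simps]
    have hN := prod_dfac_ne (2*p+1) (2*p+1 + d - 1)
    have hexp : (-t) ^ (2*p+1) = -(t^(2*p+1)) := by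
      rw [Odd.neg_pow ⟨p, by ring⟩]
    simp only [hf, hexp, coefa, if_neg hod]
    rw [show 2*p+1+d-1 = 2*p+d from by omega]
    push_cast at hN ⊢
    rw [show 2*p+1+d-1 = 2*p+d from by omega] at *
    field_simp
  rw [cda, mul_sub, hA, hB]
  ring

lemma pi2pos : (0:ℝ) < π/2 := pi_div_two_pos'

lemma Gd_zero (d : ℕ) : Gd d 0 = Fd d := by
  funext t
  unfold Gd Fd
  apply intervalIntegral.integral_congr
  intro θ _
  simp

lemma hasDerivAt_Gd (d k : ℕ) (t : ℝ) :
    HasDerivAt (Gd d k) (-Gd d (k+1) t) t := by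
  set μ : Measure ℝ := volume.restrict (Set.Ioc (0:ℝ) (π/2)) with hμ
  have main := _root_.hasDerivAt_integral_of_dominated_loc_of_deriv_le
    (𝕜 := ℝ) (μ := μ) (x₀ := t) (s := Metric.ball t 1)
    (F := fun x θ => sin θ ^ k * exp (-(x * sin θ)) * cos θ ^ (d-1))
    (F' := fun x θ => -(sin θ ^ (k+1) * exp (-(x * sin θ)) * cos θ ^ (d-1)))
    (bound := fun _ => exp (|t| + 1)) (Metric.ball_mem_nhds t one_pos)
    (Filter.Eventually.of_forall fun x => (Continuous.aestronglyMeasurable (by fun_prop)))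
    (Continuous.integrableOn_Ioc (by fun_prop))
    (Continuous.aestronglyMeasurable (by fun_prop))
    ?_ (integrable_const _) ?_
  · have h1 : (∫ θ, -(sin θ ^ (k+1) * exp (-(t * sin θ)) * cos θ ^ (d-1)) ∂μ)
        = -Gd d (k+1) t := by
      rw [MeasureTheory.integral_neg, Gd, intervalIntegral.integral_of_le pi2pos.le]
    have h2 := main.2
    rw [h1] at h2
    have : Gd d k = fun x => ∫ θ, sin θ ^ k * exp (-(x * sin θ)) * cos θ ^ (d-1) ∂μ := by
      funext x
      rw [Gd, intervalIntegral.integral_of_le pi2pos.le]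
    rw [this]
    exact h2
  · rw [ae_restrict_iff' measurableSet_Ioc]
    filter_upwards with θ hθ
    intro x hx
    obtain ⟨hs0, hs1⟩ := sin_mem hθ
    obtain ⟨hc0, hc1⟩ := cos_mem hθ
    have hxabs : |x| ≤ |t| + 1 := by
      have := abs_sub_abs_le_abs_sub x t
      have hd := mem_ball_iff_norm.mp hx
      rw [Real.norm_eq_abs] at hd
      linarith
    have hexp : exp (-(x * sin θ)) ≤ exp (|t| + 1) := by
      apply Real.exp_le_exp.mpr
      have : -(x * sin θ) ≤ |x| * sin θ := by
        rw [neg_mul_eq_neg_mul]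
        exact mul_le_mul_of_nonneg_right (neg_le_abs x) hs0
      have h2 : |x| * sin θ ≤ |x| := by
        nlinarith [abs_nonneg x]
      linarith
    rw [norm_neg, norm_mul, norm_mul, norm_pow, norm_pow, Real.norm_eq_abs,
      Real.norm_eq_abs, Real.norm_eq_abs,
      abs_of_nonneg hs0, abs_of_nonneg hc0, abs_of_nonneg (exp_nonneg _)]
    calc sin θ ^ (k+1) * exp (-(x * sin θ)) * cos θ ^ (d-1)
        ≤ 1 * exp (|t|+1) * 1 := by
          apply mul_le_mul
          apply mul_le_mul (pow_le_one₀ hs0 hs1) hexp (exp_nonneg _) zero_le_one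
          exact pow_le_one₀ hc0 hc1
          positivity
          positivity
      _ = exp (|t|+1) := by ring
  · rw [ae_restrict_iff' measurableSet_Ioc]
    filter_upwards with θ hθ
    intro x hx
    have hde : HasDerivAt (fun x : ℝ => exp (-(x * sin θ)))
        (-sin θ * exp (-(x * sin θ))) x := by
      have h1 : HasDerivAt (fun x : ℝ => -(x * sin θ)) (-sin θ) x :=
        (hasDerivAt_mul_const (sin θ)).neg
      have := h1.exp
      convert this using 1
      ring
    have := (hde.const_mul (sin θ ^ k)).mul_const (cos θ ^ (d-1))
    convert this using 1
    · rfl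
    ring


lemma cda_eq_Gd0 (d : ℕ) (hd : 1 ≤ d) : cda d (αd d) = Gd d 0 := by
  funext t
  rw [cda_eq_Fd d hd t, Gd_zero]

lemma iteratedDeriv_cda (d : ℕ) (hd : 1 ≤ d) (k : ℕ) :
    iteratedDeriv k (cda d (αd d)) = fun t => (-1)^k * Gd d k t := by
  induction k with
  | zero => simp [iteratedDeriv_zero, cda_eq_Gd0 d hd]
  | succ k ih =>
    rw [iteratedDeriv_succ, ih]
    funext t
    have h := ((hasDerivAt_Gd d k t).const_mul ((-1:ℝ)^k)).deriv
    simp only [deriv] at h ⊢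
    rw [h]
    ring

lemma sincos_mem {θ : ℝ} (h : θ ∈ Set.Icc (0:ℝ) (π/2)) :
    0 ≤ sin θ ∧ sin θ ≤ 1 ∧ 0 ≤ cos θ ∧ cos θ ≤ 1 :=
  ⟨Real.sin_nonneg_of_nonneg_of_le_pi h.1 (by linarith [h.2, pi_pos.le]),
    Real.sin_le_one θ,
    Real.cos_nonneg_of_mem_Icc ⟨by linarith [h.1, pi_pos], h.2⟩, Real.cos_le_one θ⟩

lemma contIntegrand (d k : ℕ) (t : ℝ) : Continuous
    (fun θ : ℝ => sin θ ^ k * exp (-(t * sin θ)) * cos θ ^ (d-1)) := by fun_prop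

lemma Gd_nonneg (d k : ℕ) (t : ℝ) : 0 ≤ Gd d k t := by
  apply intervalIntegral.integral_nonneg pi2pos.le
  intro θ hθ
  obtain ⟨h1, h2, h3, h4⟩ := sincos_mem hθ
  positivity

lemma Gd_le_pi2 (d k : ℕ) (t : ℝ) (ht : 0 ≤ t) : Gd d k t ≤ π/2 := by
  have : Gd d k t ≤ ∫ _ in (0:ℝ)..(π/2), (1:ℝ) := by
    apply intervalIntegral.integral_mono_on pi2pos.le
      ((contIntegrand d k t).intervalIntegrable _ _)
      intervalIntegrable_const
    intro θ hθ
    obtain ⟨h1, h2, h3, h4⟩ := sincos_mem hθ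
    have he : exp (-(t * sin θ)) ≤ 1 := by
      rw [Real.exp_le_one_iff]
      nlinarith
    calc sin θ ^ k * exp (-(t * sin θ)) * cos θ ^ (d-1) ≤ 1 * 1 * 1 := by
          apply mul_le_mul _ (pow_le_one₀ h3 h4) (by positivity) (by norm_num)
          apply mul_le_mul (pow_le_one₀ h1 h2) he (exp_nonneg _) (by norm_num)
      _ = 1 := by ring
  simpa using this

lemma exp_integral_le (c : ℝ) (hc : 0 < c) :
    ∫ θ in (0:ℝ)..(π/2), exp (-(c * θ)) ≤ 1/c := by
  have key : ∀ θ : ℝ, HasDerivAt (fun θ => -exp (-(c * θ)) / c) (exp (-(c * θ))) θ := by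
    intro θ
    have h1 : HasDerivAt (fun θ : ℝ => -(c * θ)) (-c) θ := by
      simpa using (hasDerivAt_id θ).const_mul (-c)
    have := (h1.exp.fun_neg).div_const c
    convert this using 1
    · rfl
    · rfl
    field_simp
  rw [integral_eq_sub_of_hasDerivAt (fun θ _ => key θ)
    ((by fun_prop : Continuous fun θ : ℝ => exp (-(c*θ))).intervalIntegrable _ _)]
  have h1 : 0 < exp (-(c * (π/2))) := exp_pos _
  have h2 : exp (-(c * 0)) = 1 := by simp
  rw [h2]
  have expand : -exp (-(c * (π/2))) / c - -1/c = (1 - exp (-(c * (π/2))))/c := by ring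
  rw [expand]
  gcongr
  linarith

lemma pow_le_factorial_exp (k : ℕ) (x : ℝ) (hx : 0 ≤ x) :
    x ^ k ≤ (k ! : ℝ) * exp x := by
  have h1 : x ^ k / (k ! : ℝ) ≤ exp x := by
    have := Real.sum_le_exp_of_nonneg hx (k+1)
    have h2 : x ^ k / (k ! : ℝ) ≤ ∑ i ∈ Finset.range (k+1), x ^ i / (i ! : ℝ) := by
      apply Finset.single_le_sum (f := fun i => x ^ i / (i ! : ℝ))
        (fun i _ => by positivity) (Finset.self_mem_range_succ k)
    linarith
  have h3 : (0:ℝ) < k ! := by positivity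
  calc x ^ k = (x ^ k / (k ! : ℝ)) * k ! := by field_simp
    _ ≤ exp x * k ! := by apply mul_le_mul_of_nonneg_right h1 h3.le
    _ = (k ! : ℝ) * exp x := by ring

lemma Gd_decay (d k : ℕ) (t : ℝ) (ht : 0 < t) :
    Gd d k t ≤ (k ! : ℝ) * (π/t)^(k+1) := by
  have hπt : 0 < π / t := by positivity
  have step1 : Gd d k t ≤ ∫ θ in (0:ℝ)..(π/2), (k ! : ℝ) * (π/t)^k * exp (-(t/π * θ)) := by
    apply intervalIntegral.integral_mono_on pi2pos.le
      ((contIntegrand d k t).intervalIntegrable _ _)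
      ((by fun_prop : Continuous fun θ : ℝ => (k ! : ℝ) * (π/t)^k * exp (-(t/π * θ))).intervalIntegrable _ _)
    intro θ hθ
    obtain ⟨h1, h2, h3, h4⟩ := sincos_mem hθ
    have hθ0 : 0 ≤ θ := hθ.1
    have hsinθ : sin θ ≤ θ := Real.sin_le hθ0
    have hsin_lb : 2/π * θ ≤ sin θ := Real.mul_le_sin hθ0 hθ.2
    -- sin^k e^{-t sin} ≤ θ^k e^{-2t/π θ}
    have e1 : sin θ ^ k * exp (-(t * sin θ)) * cos θ ^ (d-1)
        ≤ θ ^ k * exp (-(2*t/π * θ)) := by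
      have a1 : sin θ ^ k ≤ θ ^ k := pow_le_pow_left₀ h1 hsinθ k
      have a2 : exp (-(t * sin θ)) ≤ exp (-(2*t/π * θ)) := by
        apply Real.exp_le_exp.mpr
        have : 2*t/π*θ ≤ t * sin θ := by
          have := mul_le_mul_of_nonneg_left hsin_lb ht.le
          calc 2*t/π*θ = t * (2/π*θ) := by ring
            _ ≤ t * sin θ := this
        linarith
      have a3 : cos θ ^ (d-1) ≤ 1 := pow_le_one₀ h3 h4
      calc sin θ ^ k * exp (-(t * sin θ)) * cos θ ^ (d-1)
          ≤ sin θ ^ k * exp (-(t * sin θ)) * 1 := by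
            apply mul_le_mul_of_nonneg_left a3 (by positivity)
        _ = sin θ ^ k * exp (-(t * sin θ)) := by ring
        _ ≤ θ ^ k * exp (-(2*t/π * θ)) :=
            mul_le_mul a1 a2 (exp_nonneg _) (by positivity)
    -- θ^k e^{-2x} ≤ k! (π/t)^k e^{-x} with x = t/π θ
    have e2 : θ ^ k * exp (-(2*t/π * θ)) ≤ (k ! : ℝ) * (π/t)^k * exp (-(t/π * θ)) := by
      set x := t/π * θ with hx
      have hx0 : 0 ≤ x := by positivity
      have hθx : θ = π/t * x := by
        rw [hx]; field_simp
      have b1 : θ ^ k = (π/t)^k * x^k := by rw [hθx, mul_pow]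
      have b2 : x ^ k ≤ (k ! : ℝ) * exp x := pow_le_factorial_exp k x hx0
      have b3 : exp (-(2*t/π*θ)) = exp (-x) * exp (-x) := by
        rw [← Real.exp_add]; congr 1; rw [hx]; ring
      rw [b1, b3]
      have b4 : (π/t)^k * x^k * (exp (-x) * exp (-x))
          ≤ (π/t)^k * ((k ! : ℝ) * exp x) * (exp (-x) * exp (-x)) := by
        apply mul_le_mul_of_nonneg_right _ (by positivity)
        apply mul_le_mul_of_nonneg_left b2 (by positivity)
      have b5 : (π/t)^k * ((k ! : ℝ) * exp x) * (exp (-x) * exp (-x))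
          = (k ! : ℝ) * (π/t)^k * exp (-x) := by
        have : exp x * exp (-x) = 1 := by rw [← Real.exp_add]; simp
        calc (π/t)^k * ((k ! : ℝ) * exp x) * (exp (-x) * exp (-x))
            = (k ! : ℝ) * (π/t)^k * exp (-x) * (exp x * exp (-x)) := by ring
          _ = (k ! : ℝ) * (π/t)^k * exp (-x) := by rw [this, mul_one]
      calc (π/t)^k * x^k * (exp (-x) * exp (-x)) ≤ _ := b4
        _ = (k ! : ℝ) * (π/t)^k * exp (-x) := b5
    linarith
  rw [intervalIntegral.integral_const_mul] at step1
  have step2 := exp_integral_le (t/π) (by positivity)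
  calc Gd d k t ≤ (k ! : ℝ) * (π/t)^k * ∫ θ in (0:ℝ)..(π/2), exp (-(t/π * θ)) := step1
    _ ≤ (k ! : ℝ) * (π/t)^k * (1/(t/π)) := by
        apply mul_le_mul_of_nonneg_left step2 (by positivity)
    _ = (k ! : ℝ) * (π/t)^(k+1) := by
        rw [one_div, pow_succ]
        field_simp

lemma Gd_le_Gd0 (d k : ℕ) (t : ℝ) (ht : 0 ≤ t) : Gd d k t ≤ Gd d 0 t := by
  apply intervalIntegral.integral_mono_on pi2pos.le
    ((contIntegrand d k t).intervalIntegrable _ _)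
    ((contIntegrand d 0 t).intervalIntegrable _ _)
  intro θ hθ
  obtain ⟨h1, h2, h3, h4⟩ := sincos_mem hθ
  have hk : sin θ ^ k ≤ 1 := pow_le_one₀ h1 h2
  have h0 : sin θ ^ 0 = (1:ℝ) := pow_zero _
  rw [h0]
  have : sin θ ^ k * exp (-(t * sin θ)) ≤ 1 * exp (-(t * sin θ)) :=
    mul_le_mul_of_nonneg_right hk (exp_nonneg _)
  exact mul_le_mul_of_nonneg_right this (by positivity)

theorem stmt11 (d : ℕ) (hd : 1 ≤ d) :
    ∃ C : ℝ, 0 < C ∧ ∀ s ∈ Set.Icc (0:ℝ) 1, ∀ (k : ℕ) (t : ℝ), 0 ≤ t →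
      |iteratedDeriv k (cda d (if Even d then (1:ℝ) else Real.pi / 2)) t|
        ≤ C ^ (1 + k) * ((k ! : ℝ)) ^ ((1 + s) / 2) * (1 + t) ^ (-(1:ℝ) - s * k) := by
  refine ⟨2*π, by positivity, ?_⟩
  intro s hs k t ht
  obtain ⟨hs0, hs1⟩ := hs
  have hα : (if Even d then (1:ℝ) else Real.pi / 2) = αd d := rfl
  rw [hα, iteratedDeriv_cda d hd k]
  simp only []
  have hGn := Gd_nonneg d k t
  rw [abs_mul, abs_pow, abs_neg, abs_one, one_pow, one_mul, abs_of_nonneg hGn]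
  set G := Gd d k t with hG
  set K := (k ! : ℝ) with hKdef
  have hK1 : (1:ℝ) ≤ K := by
    rw [hKdef]; exact_mod_cast Nat.one_le_iff_ne_zero.mpr (Nat.factorial_ne_zero k)
  have hK0 : (0:ℝ) < K := lt_of_lt_of_le one_pos hK1
  set a : ℝ := 1 + s * k with ha
  have hsk0 : 0 ≤ s * k := by positivity
  have ha1 : 1 ≤ a := by linarith
  have ha0 : 0 < a := lt_of_lt_of_le one_pos ha1
  have hak : a ≤ 1 + k := by
    have : s * k ≤ k := by
      nlinarith [Nat.cast_nonneg (α := ℝ) k]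
    linarith
  have hexp_eq : -(1:ℝ) - s * k = -a := by rw [ha]; ring
  rw [hexp_eq]
  have h1t : (0:ℝ) < 1 + t := by linarith
  have hKpow1 : (1:ℝ) ≤ K ^ ((1+s)/2) := by
    have := Real.rpow_le_rpow_of_exponent_le hK1 (by linarith : (0:ℝ) ≤ (1+s)/2)
    rwa [Real.rpow_zero] at this
  have hpi1 : (1:ℝ) ≤ π := by linarith [Real.pi_gt_three]
  have hC1 : (1:ℝ) ≤ 2*π := by linarith
  have hCpow : ((2*π) ^ (1+k) : ℝ) = (2*π) ^ ((1:ℝ)+k) := by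
    rw [show ((1:ℝ)+k) = ((1+k : ℕ) : ℝ) from by push_cast; ring, Real.rpow_natCast]
  rcases le_or_gt t 1 with hcase | hcase
  · -- small t
    have hGb : G ≤ π/2 := Gd_le_pi2 d k t ht
    have hb1 : (2:ℝ)^(-((1:ℝ)+(k:ℝ))) ≤ (1+t)^(-a) := by
      calc (2:ℝ)^(-((1:ℝ)+(k:ℝ))) ≤ (2:ℝ)^(-a) :=
            Real.rpow_le_rpow_of_exponent_le one_le_two (by linarith)
        _ ≤ (1+t)^(-a) :=
            Real.rpow_le_rpow_of_nonpos h1t (by linarith) (by linarith)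
    have hb2 : (2*π:ℝ)^(1+k) * (2:ℝ)^(-((1:ℝ)+(k:ℝ))) = π ^ (1+k) := by
      rw [Real.rpow_neg (by norm_num),
        show (2:ℝ)^((1:ℝ)+(k:ℝ)) = (2:ℝ)^(1+k) from by
          rw [show ((1:ℝ)+(k:ℝ)) = ((1+k : ℕ) : ℝ) from by push_cast; ring,
            Real.rpow_natCast],
        mul_pow]
      field_simp
    have hπk : (π:ℝ)/2 ≤ π ^ (1+k) := by
      have : (π:ℝ) ≤ π ^ (1+k) := by
        calc (π:ℝ) = π ^ 1 := (pow_one π).symm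
          _ ≤ π ^ (1+k) := pow_le_pow_right₀ hpi1 (by omega)
      linarith
    calc G ≤ π/2 := hGb
      _ ≤ π ^ (1+k) := hπk
      _ = (2*π)^(1+k) * (2:ℝ)^(-((1:ℝ)+(k:ℝ))) := hb2.symm
      _ ≤ (2*π)^(1+k) * (K ^ ((1+s)/2) * (1+t)^(-a)) := by
          apply mul_le_mul_of_nonneg_left _ (by positivity)
          calc (2:ℝ)^(-((1:ℝ)+(k:ℝ))) ≤ (1+t)^(-a) := hb1
            _ = 1 * (1+t)^(-a) := (one_mul _).symm
            _ ≤ K ^ ((1+s)/2) * (1+t)^(-a) := by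
                apply mul_le_mul_of_nonneg_right hKpow1 (by positivity)
      _ = (2*π)^(1+k) * K ^ ((1+s)/2) * (1+t)^(-a) := by ring
  · -- t ≥ 1
    have htpos : 0 < t := lt_trans one_pos hcase
    set X : ℝ := π / t with hX
    have hXpos : 0 < X := by positivity
    have hG2 : G ≤ X := by
      have h0 := Gd_decay d 0 t htpos
      norm_num at h0
      exact le_trans (Gd_le_Gd0 d k t ht) h0
    have hG3 : G ≤ K * X ^ (k+1) := Gd_decay d k t htpos
    by_cases hG0 : G = 0
    · rw [hG0]; positivity
    have hGpos : 0 < G := lt_of_le_of_ne hGn (Ne.symm hG0)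
    have hXnat : (X : ℝ) ^ (k+1) = X ^ (((k:ℝ)+1)) := by
      rw [show ((k:ℝ)+1) = ((k+1 : ℕ) : ℝ) from by push_cast; ring, Real.rpow_natCast]
    have hmain : G ≤ K ^ s * X ^ a := by
      have e0 : G = G^(1-s) * G^s := by
        rw [← Real.rpow_add hGpos]
        norm_num
      have e1 : G^(1-s) ≤ X^(1-s) := Real.rpow_le_rpow hGn hG2 (by linarith)
      have e2 : G^s ≤ (K * X^(k+1))^s := Real.rpow_le_rpow hGn hG3 hs0
      have e3 : (K * X^(k+1))^s = K^s * X^(((k:ℝ)+1)*s) := by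
        rw [Real.mul_rpow hK0.le (by positivity), hXnat, ← Real.rpow_mul hXpos.le]
      have e4 : X^(1-s) * (K^s * X^(((k:ℝ)+1)*s)) = K^s * X^a := by
        rw [show X^(1-s) * (K^s * X^(((k:ℝ)+1)*s))
            = K^s * (X^(1-s) * X^(((k:ℝ)+1)*s)) from by ring,
          ← Real.rpow_add hXpos]
        congr 1
        rw [ha]
        ring_nf
      calc G = G^(1-s) * G^s := e0
        _ ≤ X^(1-s) * (K^s * X^(((k:ℝ)+1)*s)) := by
            apply mul_le_mul e1 (e2.trans_eq e3) (by positivity) (by positivity)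
        _ = K^s * X^a := e4
    have hKs : K^s ≤ K^((1+s)/2) :=
      Real.rpow_le_rpow_of_exponent_le hK1 (by linarith)
    have hXa : X^a ≤ (2*π) ^ ((1:ℝ)+k) * (1+t)^(-a) := by
      have hprod : X^a * (1+t)^a = (π*(1+t)/t)^a := by
        rw [← Real.mul_rpow hXpos.le h1t.le]
        congr 1
        rw [hX]
        field_simp
      have hbase : π*(1+t)/t ≤ 2*π := by
        rw [div_le_iff₀ htpos]
        nlinarith [Real.pi_pos]
      have hc : (π*(1+t)/t)^a ≤ (2*π)^a :=
        Real.rpow_le_rpow (by positivity) hbase ha0.le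
      have hc2 : (2*π)^a ≤ (2*π)^((1:ℝ)+(k:ℝ)) :=
        Real.rpow_le_rpow_of_exponent_le hC1 hak
      have hsum : X^a * (1+t)^a ≤ (2*π)^((1:ℝ)+(k:ℝ)) :=
        hprod.le.trans (hc.trans hc2)
      have hcancel : (1+t)^a * (1+t)^(-a) = 1 := by
        rw [← Real.rpow_add h1t]
        simp
      calc X^a = X^a * ((1+t)^a * (1+t)^(-a)) := by rw [hcancel, mul_one]
        _ = (X^a * (1+t)^a) * (1+t)^(-a) := by ring
        _ ≤ (2*π)^((1:ℝ)+(k:ℝ)) * (1+t)^(-a) := by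
            apply mul_le_mul_of_nonneg_right hsum (by positivity)
    calc G ≤ K^s * X^a := hmain
      _ ≤ K^((1+s)/2) * ((2*π) ^ ((1:ℝ)+(k:ℝ)) * (1+t)^(-a)) := by
          apply mul_le_mul hKs hXa (by positivity) (by positivity)
      _ = (2*π)^(1+k) * K^((1+s)/2) * (1+t)^(-a) := by
          rw [hCpow]
          push_cast
          ring
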